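/- For each KPP reaction function f, the propagation speed v*(u_c) tends to 2 as u_c → 0⁺, where 2 is the minimum propagation speed of permanent form travelling waves in the absence of cut-off. -/

import Mathlib

open Real Filter Topology

/-- A KPP reaction function: `f ∈ C¹`, `f 0 = f 1 = 0`, `f' 0 = 1`, `f' 1 < 0`,
`0 < f u ≤ u` on `(0,1)` and `f u < 0` for `u > 1`. -/
def IsKPP (f : ℝ → ℝ) : Prop :=
  ContDiff ℝ 1 f ∧ f 0 = 0 ∧ f 1 = 0 ∧ deriv f 0 = 1 ∧ deriv f 1 < 0 ∧
  (∀ u : ℝ, 0 < u → u < 1 → 0 < f u ∧ f u ≤ u) ∧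
  (∀ u : ℝ, 1 < u → f u < 0)

/-- The cut-off reaction function: `f_c u = f u` for `u > u_c`, and `0` for `u ≤ u_c`. -/
noncomputable def cutoff (f : ℝ → ℝ) (uc : ℝ) : ℝ → ℝ :=
  fun u => if uc < u then f u else 0

/-- A permanent form travelling wave solution with cut-off `uc` and speed `v`. -/
def IsPTW (f : ℝ → ℝ) (uc v : ℝ) (U : ℝ → ℝ) : Prop :=
  ContDiff ℝ 1 U ∧
  (∀ y : ℝ, y ≠ 0 → ContDiffAt ℝ 2 U y) ∧
  (∀ y : ℝ, y ≠ 0 → deriv (deriv U) y + v * deriv U y + cutoff f uc (U y) = 0) ∧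
  U 0 = uc ∧
  (∀ y : ℝ, y < 0 → uc ≤ U y ∧ U y ≤ 1) ∧
  (∀ y : ℝ, 0 < y → 0 ≤ U y ∧ U y ≤ uc) ∧
  Tendsto U atBot (𝓝 1) ∧
  Tendsto U atTop (𝓝 0)


open Set

-- helper: constant on Ici from zero derivative
lemma constOn_Ici {F : ℝ → ℝ} {a : ℝ} (hc : ContinuousOn F (Ici a))
    (hd : ∀ x ∈ Ioi a, HasDerivAt F 0 x) : ∀ y ∈ Ici a, F y = F a := by
  have hdo : DifferentiableOn ℝ F (interior (Ici a)) := by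
    rw [interior_Ici]
    exact fun x hx => ((hd x hx).differentiableAt).differentiableWithinAt
  have h0 : ∀ x ∈ interior (Ici a), deriv F x = 0 := by
    rw [interior_Ici]; exact fun x hx => (hd x hx).deriv
  have hm := monotoneOn_of_deriv_nonneg (convex_Ici a) hc hdo (fun x hx => (h0 x hx).ge)
  have ha := antitoneOn_of_deriv_nonpos (convex_Ici a) hc hdo (fun x hx => (h0 x hx).le)
  intro y hy
  exact le_antisymm (ha (mem_Ici.2 le_rfl) hy hy) (hm (mem_Ici.2 le_rfl) hy hy)

lemma diffat_deriv {U : ℝ → ℝ} {y : ℝ} (h : ContDiffAt ℝ 2 U y) :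
    DifferentiableAt ℝ (deriv U) y := by
  obtain ⟨u, hu, hcd⟩ := h.contDiffOn le_rfl (by simp)
  obtain ⟨t, hts, hto, hyt⟩ := mem_nhds_iff.1 hu
  have h2 : ContDiffOn ℝ 2 U t := hcd.mono hts
  have h1 : ContDiffOn ℝ 1 (deriv U) t := by
    have h2' : ContDiffOn ℝ ((1:ℕ∞) + 1) U t := by
      have : ((1:ℕ∞) + 1 : WithTop ℕ∞) = 2 := by norm_num
      rw [this]; exact h2
    exact ((contDiffOn_succ_iff_deriv_of_isOpen hto).1 h2').2.2
  exact (h1.differentiableOn one_ne_zero).differentiableAt (hto.mem_nhds hyt)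


lemma cutoff_nonneg' {f : ℝ → ℝ} (hf : IsKPP f) {uc u : ℝ} (huc : 0 ≤ uc)
    (h1 : u ≤ 1) : 0 ≤ cutoff f uc u := by
  unfold cutoff
  split_ifs with h
  · rcases lt_or_eq_of_le h1 with h1' | h1'
    · exact (hf.2.2.2.2.2.1 u (lt_of_le_of_lt huc h) h1').1.le
    · rw [h1', hf.2.2.1]
  · exact le_refl 0

lemma cutoff_le_self' {f : ℝ → ℝ} (hf : IsKPP f) {uc u : ℝ} (huc : 0 ≤ uc)
    (h0 : 0 ≤ u) (h1 : u ≤ 1) : cutoff f uc u ≤ u := by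
  unfold cutoff
  split_ifs with h
  · rcases lt_or_eq_of_le h1 with h1' | h1'
    · exact (hf.2.2.2.2.2.1 u (lt_of_le_of_lt huc h) h1').2
    · rw [h1', hf.2.2.1]; linarith
  · exact h0

lemma cutoff_eq_zero {f : ℝ → ℝ} {uc u : ℝ} (h : u ≤ uc) : cutoff f uc u = 0 := by
  unfold cutoff
  rw [if_neg (not_lt.2 h)]

section Wave

variable {f : ℝ → ℝ} {uc v : ℝ} {U : ℝ → ℝ}

/-- second derivative as HasDerivAt, with ODE substituted -/
lemma hdd (hU : IsPTW f uc v U) {y : ℝ} (hy : y ≠ 0) :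
    HasDerivAt (deriv U) (-(v * deriv U y + cutoff f uc (U y))) y := by
  have h := (diffat_deriv (hU.2.1 y hy)).hasDerivAt
  have heq : deriv (deriv U) y = -(v * deriv U y + cutoff f uc (U y)) := by
    linarith [hU.2.2.1 y hy]
  rwa [heq] at h

lemma vpos (huc : uc ∈ Ioo (0:ℝ) 1) (hv : 0 ≤ v) (hU : IsPTW f uc v U) : 0 < v := by
  rcases lt_or_eq_of_le hv with h | h
  · exact h
  exfalso
  -- v = 0
  have hv0 : v = 0 := h.symm
  obtain ⟨hU1, hU2, hode, hU0, hneg, hpos, hbot, htop⟩ := hU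
  have hdC : Continuous (deriv U) := hU1.continuous_deriv le_rfl
  have hstep : ∀ y ∈ Ici (0:ℝ), deriv U y = deriv U 0 := by
    apply constOn_Ici hdC.continuousOn
    intro x hx
    have hx0 : x ≠ 0 := ne_of_gt hx
    have h1 := hdd ⟨hU1, hU2, hode, hU0, hneg, hpos, hbot, htop⟩ hx0
    have hc : cutoff f uc (U x) = 0 := cutoff_eq_zero (hpos x hx).2
    rw [hc, hv0] at h1
    simpa using h1
  set K := deriv U 0 with hK
  clear_value K
  have hlin : ∀ y ∈ Ici (0:ℝ), U y = uc + K * y := by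
    have hcst : ∀ y ∈ Ici (0:ℝ), U y - K * y = U 0 - K * 0 := by
      apply constOn_Ici ((hU1.continuous.sub (continuous_const.mul continuous_id)).continuousOn)
      intro x hx
      have hd1 : HasDerivAt (fun y => U y - K * y) (deriv U x - K * 1) x :=
        ((hU1.differentiable one_ne_zero x).hasDerivAt).sub ((hasDerivAt_id x).const_mul K)
      have : deriv U x - K * 1 = 0 := by rw [hstep x (mem_Ici.2 (le_of_lt hx))]; ring
      rwa [this] at hd1
    intro y hy
    have := hcst y hy
    rw [hU0] at this
    linarith [this]
  rcases lt_trichotomy K 0 with hK0 | hK0 | hK0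
  · have hKne : K ≠ 0 := ne_of_lt hK0
    have hy0 : 0 < (uc + 1) / (-K) := div_pos (by linarith [huc.1]) (by linarith)
    have h1 := hlin ((uc + 1) / (-K)) (le_of_lt hy0)
    have hKne' : -K ≠ 0 := neg_ne_zero.2 hKne
    have hval : K * ((uc + 1) / (-K)) = -(uc + 1) := by
      field_simp
    linarith [(hpos ((uc + 1) / (-K)) hy0).1]
  · have hconst : ∀ y ∈ Ici (0:ℝ), U y = uc := by
      intro y hy; rw [hlin y hy, hK0]; ring
    have h2 : Tendsto (fun _ : ℝ => uc) atTop (𝓝 0) := by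
      apply htop.congr'
      filter_upwards [eventually_ge_atTop (0:ℝ)] with y hy
      exact hconst y hy
    have := tendsto_nhds_unique h2 tendsto_const_nhds
    linarith [huc.1]
  · have hKne : K ≠ 0 := ne_of_gt hK0
    have hy0 : 0 < 1 / K := by positivity
    have h1 := hlin (1 / K) (le_of_lt hy0)
    have hval : K * (1 / K) = 1 := by field_simp
    linarith [(hpos (1 / K) hy0).2]

/-- explicit solution on the right of the cut-off point -/
lemma right_side (huc : uc ∈ Ioo (0:ℝ) 1) (hv : 0 < v) (hU : IsPTW f uc v U) :
    ∀ y ∈ Ici (0:ℝ), U y = uc * exp (-(v*y)) ∧ deriv U y = -(v*uc) * exp (-(v*y)) := by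
  obtain ⟨hU1, hU2, hode, hU0, hneg, hpos, hbot, htop⟩ := hU
  have hUfull : IsPTW f uc v U := ⟨hU1, hU2, hode, hU0, hneg, hpos, hbot, htop⟩
  have hdC : Continuous (deriv U) := hU1.continuous_deriv le_rfl
  have hD : Differentiable ℝ U := hU1.differentiable one_ne_zero
  -- e^{vy} * U' is constant on Ici 0
  have hgc : Continuous (fun y : ℝ => exp (v*y) * deriv U y) :=
    (Real.continuous_exp.comp (continuous_const.mul continuous_id)).mul hdC
  have hge : ∀ x : ℝ, HasDerivAt (fun y : ℝ => exp (v*y)) (exp (v*x) * v) x := by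
    intro x
    simpa using (((hasDerivAt_id x).const_mul v).exp)
  have hgconst : ∀ y ∈ Ici (0:ℝ), exp (v*y) * deriv U y = exp (v*0) * deriv U 0 := by
    apply constOn_Ici hgc.continuousOn
    intro x hx
    have hx0 : x ≠ 0 := ne_of_gt hx
    have h2 := (hge x).mul (hdd hUfull hx0)
    have hc : cutoff f uc (U x) = 0 := cutoff_eq_zero (hpos x hx).2
    rw [hc] at h2
    have : exp (v*x) * v * deriv U x + exp (v*x) * -(v * deriv U x + 0) = 0 := by ring
    rwa [this] at h2
  set K := deriv U 0 with hK
  clear_value K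
  have hdUy : ∀ y ∈ Ici (0:ℝ), deriv U y = K * exp (-(v*y)) := by
    intro y hy
    have h1 := hgconst y hy
    rw [mul_zero, Real.exp_zero, one_mul] at h1
    have he : exp (v*y) ≠ 0 := Real.exp_ne_zero _
    rw [Real.exp_neg]
    field_simp
    linarith [h1]
  -- φ := U + (K/v) e^{-vy} is constant on Ici 0
  have hphiconst : ∀ y ∈ Ici (0:ℝ),
      U y + (K/v) * exp (-(v*y)) = U 0 + (K/v) * exp (-(v*0)) := by
    apply constOn_Ici ((hU1.continuous.add
      (continuous_const.mul (Real.continuous_exp.comp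
        (continuous_const.mul continuous_id).neg))).continuousOn)
    intro x hx
    have hexp : HasDerivAt (fun y : ℝ => exp (-(v*y))) (exp (-(v*x)) * (-v)) x := by
      simpa using (((hasDerivAt_id x).const_mul v).neg.exp)
    have h2 := ((hD x).hasDerivAt).add ((hexp.const_mul (K/v)))
    have hval : deriv U x + K/v * (exp (-(v*x)) * (-v)) = 0 := by
      rw [hdUy x (mem_Ici.2 (le_of_lt hx))]
      field_simp
      ring
    rwa [hval] at h2
  have hKval : uc + K/v = 0 := by
    -- tendsto at top
    have hexp0 : Tendsto (fun y : ℝ => exp (-(v*y))) atTop (𝓝 0) := by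
      apply Real.tendsto_exp_atBot.comp
      exact tendsto_neg_atTop_atBot.comp (Tendsto.const_mul_atTop hv tendsto_id)
    have h1 : Tendsto (fun y : ℝ => U y + (K/v) * exp (-(v*y))) atTop (𝓝 (0 + (K/v) * 0)) :=
      htop.add (hexp0.const_mul (K/v))
    have h2 : Tendsto (fun y : ℝ => U y + (K/v) * exp (-(v*y))) atTop
        (𝓝 (U 0 + (K/v) * exp (-(v*0)))) := by
      apply tendsto_const_nhds.congr'
      filter_upwards [eventually_ge_atTop (0:ℝ)] with y hy
      exact (hphiconst y hy).symm
    have := tendsto_nhds_unique h1 h2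
    rw [hU0] at this
    simpa using this.symm
  have hKeq : K = -(v*uc) := by
    have hvne : v ≠ 0 := ne_of_gt hv
    field_simp at hKval
    linarith
  intro y hy
  constructor
  · have h1 := hphiconst y hy
    rw [hU0, hKeq] at h1
    have hvne : v ≠ 0 := ne_of_gt hv
    have hKv : -(v*uc)/v = -uc := by field_simp
    rw [hKv] at h1
    simp only [mul_zero, neg_zero, Real.exp_zero, mul_one] at h1
    linarith [h1]
  · rw [hdUy y hy, hKeq]

lemma gAnti (hf : IsKPP f) (huc : uc ∈ Ioo (0:ℝ) 1) (hv : 0 < v) (hU : IsPTW f uc v U) :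
    AntitoneOn (fun y : ℝ => exp (v*y) * deriv U y) (Iic 0) := by
  have hdC : Continuous (deriv U) := hU.1.continuous_deriv le_rfl
  have hgc : Continuous (fun y : ℝ => exp (v*y) * deriv U y) :=
    (Real.continuous_exp.comp (continuous_const.mul continuous_id)).mul hdC
  have hge : ∀ x : ℝ, HasDerivAt (fun y : ℝ => exp (v*y)) (exp (v*x) * v) x := by
    intro x
    simpa using (((hasDerivAt_id x).const_mul v).exp)
  apply antitoneOn_of_deriv_nonpos (convex_Iic 0) hgc.continuousOn
  · rw [interior_Iic]
    intro x hx
    exact (((hge x).mul (hdd hU (ne_of_lt hx))).differentiableAt).differentiableWithinAt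
  · rw [interior_Iic]
    intro x hx
    have hda : HasDerivAt (fun y : ℝ => exp (v*y) * deriv U y) _ x := (hge x).mul (hdd hU (ne_of_lt hx))
    rw [hda.deriv]
    have hcut : 0 ≤ cutoff f uc (U x) := cutoff_nonneg' hf huc.1.le (hU.2.2.2.2.1 x hx).2
    have : exp (v*x) * v * deriv U x + exp (v*x) * -(v * deriv U x + cutoff f uc (U x))
        = -(exp (v*x) * cutoff f uc (U x)) := by ring
    rw [this]
    have := Real.exp_pos (v*x)
    nlinarith

lemma g_lower (hf : IsKPP f) (huc : uc ∈ Ioo (0:ℝ) 1) (hv : 0 < v) (hU : IsPTW f uc v U) :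
    ∀ y ≤ (0:ℝ), -(v*uc) ≤ exp (v*y) * deriv U y := by
  intro y hy
  have h0 := (right_side huc hv hU 0 (Set.mem_Ici.2 le_rfl)).2
  simp only [mul_zero, neg_zero, Real.exp_zero, mul_one] at h0
  have := gAnti hf huc hv hU hy (mem_Iic.2 le_rfl) hy
  simp only [mul_zero, Real.exp_zero, one_mul] at this
  rw [h0] at this
  exact this

lemma dU_lower (hf : IsKPP f) (huc : uc ∈ Ioo (0:ℝ) 1) (hv : 0 < v) (hU : IsPTW f uc v U) :
    ∀ y ≤ (0:ℝ), -(v*uc) * exp (-(v*y)) ≤ deriv U y := by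
  intro y hy
  have hA := g_lower hf huc hv hU y hy
  have hE : (0:ℝ) < exp (v*y) := Real.exp_pos _
  have h1 : exp (v*y) * exp (-(v*y)) = 1 := by
    rw [← Real.exp_add]; simp
  have h2 : -(v*uc) * exp (-(v*y)) ≤ (exp (v*y) * deriv U y) * exp (-(v*y)) :=
    mul_le_mul_of_nonneg_right hA (Real.exp_pos _).le
  have h3 : (exp (v*y) * deriv U y) * exp (-(v*y)) = deriv U y := by
    rw [mul_comm (Real.exp (v*y)) (deriv U y), mul_assoc, h1, mul_one]
  linarith [h2, h3]

lemma dU_nonpos (hf : IsKPP f) (huc : uc ∈ Ioo (0:ℝ) 1) (hv : 0 < v) (hU : IsPTW f uc v U) :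
    ∀ y ≤ (0:ℝ), deriv U y ≤ 0 := by
  intro y0 hy0
  rcases eq_or_lt_of_le hy0 with h | h
  · rw [h]
    have h0 := (right_side huc hv hU 0 (Set.mem_Ici.2 le_rfl)).2
    simp only [mul_zero, neg_zero, Real.exp_zero, mul_one] at h0
    rw [h0]
    nlinarith [huc.1]
  by_contra hc
  push_neg at hc
  set c := deriv U y0 with hcdef
  clear_value c
  -- on (-∞, y0], deriv U ≥ c
  have hstep : ∀ z ≤ y0, c ≤ deriv U z := by
    intro z hz
    have hg := gAnti hf huc hv hU (le_trans hz hy0 : z ∈ Iic (0:ℝ)) (hy0 : y0 ∈ Iic (0:ℝ)) hz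
    -- exp (v*y0) * c ≤ exp (v*z) * deriv U z
    have he : exp (v*z) ≤ exp (v*y0) := by
      apply Real.exp_le_exp.2
      nlinarith
    have h2 : exp (v*z) * c ≤ exp (v*z) * deriv U z := by
      have hg' : exp (v*y0) * c ≤ exp (v*z) * deriv U z := by
        rw [hcdef]; exact hg
      calc exp (v*z) * c ≤ exp (v*y0) * c := by nlinarith
        _ ≤ exp (v*z) * deriv U z := hg'
    exact le_of_mul_le_mul_left h2 (Real.exp_pos _)
  -- U grows too much
  have hcne : c ≠ 0 := ne_of_gt hc
  set a := y0 - 2/c with ha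
  clear_value a
  have ha0 : a < y0 := by
    have : 0 < 2/c := by positivity
    linarith
  have hmono : MonotoneOn (fun z => U z - c * z) (Icc a y0) := by
    apply monotoneOn_of_deriv_nonneg (convex_Icc a y0)
    · exact ((hU.1.continuous.sub (continuous_const.mul continuous_id)).continuousOn)
    · intro x _
      exact (((hU.1.differentiable one_ne_zero x).hasDerivAt).sub
        ((hasDerivAt_id x).const_mul c)).differentiableAt.differentiableWithinAt
    · intro x hx
      rw [interior_Icc] at hx
      have hd1 : HasDerivAt (fun z => U z - c * z) (deriv U x - c * 1) x :=
        ((hU.1.differentiable one_ne_zero x).hasDerivAt).sub ((hasDerivAt_id x).const_mul c)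
      rw [hd1.deriv]
      have := hstep x hx.2.le
      linarith
  have h3 := hmono (left_mem_Icc.2 ha0.le) (right_mem_Icc.2 ha0.le) ha0.le
  -- U y0 - U a ≥ c (y0 - a) = 2
  have h4 : c * (2/c) = 2 := by field_simp
  have hUy0 : U y0 ≤ 1 := (hU.2.2.2.2.1 y0 h).2
  have hUa : uc ≤ U a := (hU.2.2.2.2.1 a (lt_trans ha0 h)).1
  simp only at h3
  have h5 : c * y0 - c * a = 2 := by
    rw [ha]
    field_simp
    ring
  linarith [h3, h5, hUy0, hUa, huc.1]

lemma U_anti (hf : IsKPP f) (huc : uc ∈ Ioo (0:ℝ) 1) (hv : 0 < v) (hU : IsPTW f uc v U) :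
    AntitoneOn U (Iic 0) := by
  apply antitoneOn_of_deriv_nonpos (convex_Iic 0) hU.1.continuous.continuousOn
  · exact (hU.1.differentiable one_ne_zero).differentiableOn
  · rw [interior_Iic]
    exact fun x hx => dU_nonpos hf huc hv hU x hx.le

lemma near_zero_slope (hf : IsKPP f) (huc : uc ∈ Ioo (0:ℝ) 1) (hU : IsPTW f uc v U) :
    ∀ ε > (0:ℝ), ∃ y ≤ (0:ℝ), -ε ≤ deriv U y := by
  intro ε hε
  by_contra hcon
  push_neg at hcon
  have hanti : AntitoneOn (fun y => U y + ε * y) (Iic 0) := by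
    apply antitoneOn_of_deriv_nonpos (convex_Iic 0)
    · exact (hU.1.continuous.add (continuous_const.mul continuous_id)).continuousOn
    · intro x _
      exact (((hU.1.differentiable one_ne_zero x).hasDerivAt).add
        ((hasDerivAt_id x).const_mul ε)).differentiableAt.differentiableWithinAt
    · intro x hx
      rw [interior_Iic] at hx
      have hd1 : HasDerivAt (fun y => U y + ε * y) (deriv U x + ε * 1) x :=
        ((hU.1.differentiable one_ne_zero x).hasDerivAt).add ((hasDerivAt_id x).const_mul ε)
      rw [hd1.deriv]
      have := hcon x hx.le
      linarith
  have hεne : ε ≠ 0 := ne_of_gt hε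
  have hylt : -(2/ε) < 0 := by
    have : 0 < 2/ε := by positivity
    linarith
  have h1 := hanti (mem_Iic.2 hylt.le) (mem_Iic.2 le_rfl) hylt.le
  simp only [mul_zero, add_zero] at h1
  rw [hU.2.2.2.1] at h1
  -- U (-(2/ε)) + ε * (-(2/ε)) ≥ uc
  have h2 : ε * (-(2/ε)) = -2 := by field_simp
  have h3 : U (-(2/ε)) ≤ 1 := (hU.2.2.2.2.1 _ hylt).2
  linarith [h1, h2, h3, huc.1]

/-- Upper bound : the wave speed is less than 2. -/
lemma v_lt_two (hf : IsKPP f) (huc : uc ∈ Ioo (0:ℝ) 1) (hv0 : 0 ≤ v)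
    (hU : IsPTW f uc v U) : v < 2 := by
  by_contra hcon
  push_neg at hcon
  have hv : 0 < v := lt_of_lt_of_le two_pos hcon
  have hD : Differentiable ℝ U := hU.1.differentiable one_ne_zero
  have hdC : Continuous (deriv U) := hU.1.continuous_deriv le_rfl
  set s := Real.sqrt (v^2 - 4) with hsdef
  have hs0 : 0 ≤ s := Real.sqrt_nonneg _
  have hs2 : s^2 = v^2 - 4 := Real.sq_sqrt (by nlinarith)
  have hsv : s < v := by nlinarith
  set l := (v - s)/2 with hldef
  have hl_pos : 0 < l := by rw [hldef]; exact div_pos (by linarith) two_pos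
  have hlv : l < v := by rw [hldef]; linarith
  have hl1 : l * (v - l) = 1 := by
    have h1 : l * (v - l) = (v^2 - s^2)/4 := by rw [hldef]; ring
    rw [h1, hs2]; ring
  clear_value l
  clear hldef
  set H := fun y : ℝ => exp (l*y) * (deriv U y + (v - l) * U y) with hHdef
  have hU01 : ∀ x : ℝ, x ≠ 0 → 0 ≤ U x ∧ U x ≤ 1 := by
    intro x hx
    rcases lt_or_gt_of_ne hx with h | h
    · exact ⟨le_trans huc.1.le (hU.2.2.2.2.1 x h).1, (hU.2.2.2.2.1 x h).2⟩
    · exact ⟨(hU.2.2.2.2.2.1 x h).1, le_trans (hU.2.2.2.2.2.1 x h).2 huc.2.le⟩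
  have hHd : ∀ x : ℝ, x ≠ 0 →
      HasDerivAt H (exp (l*x) * (U x - cutoff f uc (U x))) x := by
    intro x hx
    have he : HasDerivAt (fun y : ℝ => exp (l*y)) (exp (l*x) * l) x := by
      simpa using (((hasDerivAt_id x).const_mul l).exp)
    have hh : HasDerivAt (fun y => deriv U y + (v - l) * U y)
        (-(v * deriv U x + cutoff f uc (U x)) + (v - l) * deriv U x) x :=
      (hdd hU hx).add (((hD x).hasDerivAt).const_mul (v - l))
    have hprod := he.mul hh
    have heq : exp (l*x) * l * (deriv U x + (v - l) * U x)
        + exp (l*x) * (-(v * deriv U x + cutoff f uc (U x)) + (v - l) * deriv U x)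
        = exp (l*x) * (U x - cutoff f uc (U x)) := by
      linear_combination (Real.exp (l*x) * U x) * hl1
    rwa [heq] at hprod
  have hHpos : ∀ x : ℝ, x ≠ 0 → 0 ≤ exp (l*x) * (U x - cutoff f uc (U x)) := by
    intro x hx
    have h01 := hU01 x hx
    have := cutoff_le_self' hf huc.1.le h01.1 h01.2
    have := Real.exp_pos (l*x)
    nlinarith
  have hHc : Continuous H := by
    apply (Real.continuous_exp.comp (continuous_const.mul continuous_id)).mul
    exact hdC.add (continuous_const.mul hU.1.continuous)
  have hm1 : MonotoneOn H (Iic 0) := by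
    apply monotoneOn_of_deriv_nonneg (convex_Iic 0) hHc.continuousOn
    · rw [interior_Iic]
      exact fun x hx => ((hHd x (ne_of_lt hx)).differentiableAt).differentiableWithinAt
    · rw [interior_Iic]
      intro x hx
      rw [(hHd x (ne_of_lt hx)).deriv]
      exact hHpos x (ne_of_lt hx)
  have hm2 : MonotoneOn H (Icc 0 1) := by
    apply monotoneOn_of_deriv_nonneg (convex_Icc 0 1) hHc.continuousOn
    · rw [interior_Icc]
      exact fun x hx => ((hHd x (ne_of_gt hx.1)).differentiableAt).differentiableWithinAt
    · rw [interior_Icc]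
      intro x hx
      rw [(hHd x (ne_of_gt hx.1)).deriv]
      exact hHpos x (ne_of_gt hx.1)
  have hU1v := right_side huc hv hU 1 (mem_Ici.2 zero_le_one)
  have hH1 : H 1 = -(l * uc) * exp (l*1 + -(v*1)) := by
    simp only [hHdef]
    rw [hU1v.1, hU1v.2, Real.exp_add]
    ring
  set ε₀ := l * uc * exp (l*1 + -(v*1)) / 2 with hεdef
  have hε₀ : 0 < ε₀ := by
    rw [hεdef]
    have := Real.exp_pos (l*1 + -(v*1))
    have := huc.1
    positivity
  obtain ⟨y, hy0, hyε⟩ := near_zero_slope hf huc hU ε₀ hε₀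
  have hdUy : deriv U y ≤ 0 := dU_nonpos hf huc hv hU y hy0
  have hUy0 : 0 ≤ U y := by
    rcases eq_or_lt_of_le hy0 with h | h
    · rw [h, hU.2.2.2.1]; exact huc.1.le
    · exact le_trans huc.1.le (hU.2.2.2.2.1 y h).1
  have hexple : exp (l*y) ≤ 1 := by
    rw [show (1:ℝ) = exp 0 by simp]
    apply Real.exp_le_exp.2
    nlinarith
  have hHy : -ε₀ ≤ H y := by
    simp only [hHdef]
    have h1 : exp (l*y) * deriv U y ≥ deriv U y := by nlinarith [Real.exp_pos (l*y)]
    have h2 : 0 ≤ exp (l*y) * ((v - l) * U y) :=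
      mul_nonneg (Real.exp_pos _).le (mul_nonneg (by linarith) hUy0)
    nlinarith
  have hchain : H y ≤ H 1 := by
    calc H y ≤ H 0 := hm1 (mem_Iic.2 hy0) (mem_Iic.2 le_rfl) hy0
      _ ≤ H 1 := hm2 (left_mem_Icc.2 zero_le_one) (right_mem_Icc.2 zero_le_one) zero_le_one
  rw [hH1] at hchain
  -- -ε₀ ≤ -(2 ε₀)
  have : -(l*uc) * exp (l*1 + -(v*1)) = -(2*ε₀) := by rw [hεdef]; ring
  linarith [hHy, hchain, this, hε₀]

/-- slow decay: where `v*y ≤ -1`, the logarithmic derivative is at most `2v` -/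
lemma slow_decay (hf : IsKPP f) (huc : uc ∈ Ioo (0:ℝ) 1) (hv : 0 < v) (hU : IsPTW f uc v U) :
    ∀ yh : ℝ, yh < 0 → v * yh ≤ -1 → -(2*v) * U yh ≤ deriv U yh := by
  intro yh hyh0 hvyh
  by_contra hcc
  push_neg at hcc
  have hD : Differentiable ℝ U := hU.1.differentiable one_ne_zero
  have hUyh : uc ≤ U yh := (hU.2.2.2.2.1 yh hyh0).1
  have hUyh0 : 0 < U yh := lt_of_lt_of_le huc.1 hUyh
  set Kh := exp (v*yh) * deriv U yh with hKhdef
  -- χ = U + (Kh/v) e^{-vy} is antitone on [yh, 0]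
  have hchi : AntitoneOn (fun y => U y + (Kh/v) * exp (-(v*y))) (Icc yh 0) := by
    apply antitoneOn_of_deriv_nonpos (convex_Icc yh 0)
    · exact (hU.1.continuous.add (continuous_const.mul
        (Real.continuous_exp.comp (continuous_const.mul continuous_id).neg))).continuousOn
    · intro x _
      have hexp : HasDerivAt (fun y : ℝ => exp (-(v*y))) (exp (-(v*x)) * (-v)) x := by
        simpa using (((hasDerivAt_id x).const_mul v).neg.exp)
      exact (((hD x).hasDerivAt).add
        (hexp.const_mul (Kh/v))).differentiableAt.differentiableWithinAt
    · intro x hx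
      rw [interior_Icc] at hx
      have hexp2 : HasDerivAt (fun y : ℝ => exp (-(v*y))) (exp (-(v*x)) * (-v)) x := by
        simpa using (((hasDerivAt_id x).const_mul v).neg.exp)
      have hd1 : HasDerivAt (fun y => U y + (Kh/v) * exp (-(v*y))) _ x :=
        ((hD x).hasDerivAt).add (hexp2.const_mul (Kh/v))
      rw [hd1.deriv]
      -- deriv U x ≤ Kh * exp(-(v*x))
      have hg := gAnti hf huc hv hU (mem_Iic.2 hyh0.le) (mem_Iic.2 hx.2.le) hx.1.le
      simp only at hg
      have hE : (0:ℝ) < exp (v*x) := Real.exp_pos _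
      have hcancel : exp (v*x) * exp (-(v*x)) = 1 := by rw [← Real.exp_add]; simp
      have h2 : (exp (v*x) * deriv U x) * exp (-(v*x)) ≤ Kh * exp (-(v*x)) :=
        mul_le_mul_of_nonneg_right hg (Real.exp_pos _).le
      have h3 : (exp (v*x) * deriv U x) * exp (-(v*x)) = deriv U x := by
        rw [mul_comm (Real.exp (v*x)) (deriv U x), mul_assoc, hcancel, mul_one]
      have hvne : v ≠ 0 := ne_of_gt hv
      have h4 : Kh/v * (exp (-(v*x)) * (-v)) = -(Kh * exp (-(v*x))) := by
        field_simp
      linarith [h2, h3, h4]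
  have h5 := hchi (left_mem_Icc.2 hyh0.le) (right_mem_Icc.2 hyh0.le) hyh0.le
  simp only [mul_zero, neg_zero, Real.exp_zero, mul_one] at h5
  rw [hU.2.2.2.1] at h5
  -- h5 : uc + Kh/v ≤ U yh + Kh/v * exp (-(v*yh))
  have hE : (0:ℝ) < exp (v*yh) := Real.exp_pos _
  have hKh : Kh < exp (v*yh) * (-(2*v) * U yh) := by
    rw [hKhdef]
    nlinarith [hcc]
  have hvne : v ≠ 0 := ne_of_gt hv
  have hEE : exp (v*yh) * exp (-(v*yh)) = 1 := by rw [← Real.exp_add]; simp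
  have hEhalf : exp (v*yh) < 1/2 := by
    have h21 : (2:ℝ) < exp 1 := by
      nlinarith [Real.add_one_lt_exp (by norm_num : (1:ℝ) ≠ 0)]
    have hle : exp (v*yh) ≤ exp (-1) := Real.exp_le_exp.2 hvyh
    have hinv : exp (-1 : ℝ) * exp 1 = 1 := by rw [← Real.exp_add]; simp
    nlinarith [Real.exp_pos (-1 : ℝ)]
  have hgap : (0:ℝ) < exp (-(v*yh)) - 1 := by
    have : (1:ℝ) < exp (-(v*yh)) := by
      rw [show (1:ℝ) = exp 0 by simp]
      apply Real.exp_lt_exp.2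
      nlinarith
    linarith
  have hKv : Kh/v < -(2 * U yh) * exp (v*yh) := by
    rw [div_lt_iff₀ hv]
    nlinarith [hKh]
  have h6 : Kh/v * (exp (-(v*yh)) - 1) < (-(2 * U yh) * exp (v*yh)) * (exp (-(v*yh)) - 1) :=
    mul_lt_mul_of_pos_right hKv hgap
  have h7 : (-(2 * U yh) * exp (v*yh)) * (exp (-(v*yh)) - 1) = -(2 * U yh) * (1 - exp (v*yh)) := by
    nlinarith [hEE]
  have h8 : -(2 * U yh) * (1 - exp (v*yh)) < -(U yh) := by
    nlinarith [hUyh0, hEhalf]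
  nlinarith [h5, h6, h7, h8, huc.1]

end Wave

lemma exists_beta {f : ℝ → ℝ} (hf : IsKPP f) {ε : ℝ} (hε : 0 < ε) :
    ∃ β : ℝ, 0 < β ∧ β < 1 ∧ ∀ u : ℝ, 0 < u → u ≤ β → (1 - ε/4) * u ≤ f u := by
  have hdc : ContinuousAt (deriv f) 0 := ((hf.1.continuous_deriv le_rfl)).continuousAt
  have ht : Tendsto (deriv f) (𝓝 0) (𝓝 1) := by
    have := hdc.tendsto
    rwa [hf.2.2.2.1] at this
  have hev : ∀ᶠ t in 𝓝 (0:ℝ), 1 - ε/4 < deriv f t :=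
    ht.eventually (eventually_gt_nhds (by linarith))
  obtain ⟨β', hβ'pos, hβ'⟩ := Metric.eventually_nhds_iff.1 hev
  refine ⟨min (β'/2) (1/2), by positivity, ?_, ?_⟩
  · calc min (β'/2) (1/2) ≤ 1/2 := min_le_right _ _
      _ < 1 := by norm_num
  intro u hu0 huβ
  have hdf : Differentiable ℝ f := hf.1.differentiable one_ne_zero
  have hmono : MonotoneOn (fun t => f t - (1 - ε/4)*t) (Icc 0 (min (β'/2) (1/2))) := by
    apply monotoneOn_of_deriv_nonneg (convex_Icc _ _)
    · exact (hdf.continuous.sub (continuous_const.mul continuous_id)).continuousOn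
    · intro x _
      exact (((hdf x).hasDerivAt).sub
        ((hasDerivAt_id x).const_mul (1 - ε/4))).differentiableAt.differentiableWithinAt
    · intro x hx
      rw [interior_Icc] at hx
      have hd1 : HasDerivAt (fun t => f t - (1 - ε/4)*t) (deriv f x - (1 - ε/4) * 1) x :=
        ((hdf x).hasDerivAt).sub ((hasDerivAt_id x).const_mul (1 - ε/4))
      rw [hd1.deriv]
      have hdist : dist x 0 < β' := by
        rw [Real.dist_eq, sub_zero, abs_of_pos hx.1]
        calc x < min (β'/2) (1/2) := hx.2
          _ ≤ β'/2 := min_le_left _ _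
          _ < β' := by linarith
      have := hβ' hdist
      linarith
  have h2 := hmono (left_mem_Icc.2 (by positivity)) (mem_Icc.2 ⟨hu0.le, huβ⟩) hu0.le
  simp only [mul_zero, sub_zero] at h2
  rw [hf.2.1] at h2
  linarith [h2]

set_option maxHeartbeats 1000000 in
lemma lower_bound {f : ℝ → ℝ} (hf : IsKPP f) {ε : ℝ} (hε : 0 < ε) (hε1 : ε ≤ 1) :
    ∃ δ > (0:ℝ), ∀ uc ∈ Set.Ioo (0:ℝ) 1, uc < δ →
      ∀ v U, 0 ≤ v → IsPTW f uc v U → 2 - ε ≤ v := by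
  obtain ⟨β, hβ0, hβ1, hβf⟩ := exists_beta hf hε
  have hπ : 0 < π := Real.pi_pos
  set ω₀ := Real.sqrt (ε/2) with hω₀def
  have hω₀ : 0 < ω₀ := Real.sqrt_pos.2 (by linarith)
  have hω₀2 : ω₀^2 = ε/2 := Real.sq_sqrt (by linarith)
  set X := 3 + 4*π/ω₀ + 1 with hXdef
  have h4π : 0 < 4*π/ω₀ := by positivity
  have hX3 : 3 ≤ X := by rw [hXdef]; linarith
  refine ⟨β * exp (-X), by positivity, ?_⟩
  intro uc hucI hucδ v U hv0 hU
  by_contra hcon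
  push_neg at hcon
  have hv : 0 < v := vpos hucI hv0 hU
  have huc0 := hucI.1
  have hD : Differentiable ℝ U := hU.1.differentiable one_ne_zero
  have hdC : Continuous (deriv U) := hU.1.continuous_deriv le_rfl
  have hcont : Continuous U := hU.1.continuous
  -- log gap
  have hloguc : Real.log uc < Real.log β - X := by
    have h1 := Real.log_lt_log huc0 hucδ
    rwa [Real.log_mul (ne_of_gt hβ0) (Real.exp_ne_zero _), Real.log_exp] at h1
  -- uc * exp 3 < β
  have hexp3gt : (1:ℝ) < exp 3 := by
    rw [show (1:ℝ) = exp 0 by simp]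
    exact Real.exp_lt_exp.2 (by norm_num)
  have hucβ : uc * exp 3 < β := by
    have h2 : exp (-X) * exp 3 = exp (3 - X) := by rw [← Real.exp_add]; ring_nf
    have h3 : exp (3 - X) ≤ 1 := by
      rw [show (1:ℝ) = exp 0 by simp]
      exact Real.exp_le_exp.2 (by linarith)
    calc uc * exp 3 < (β * exp (-X)) * exp 3 := mul_lt_mul_of_pos_right hucδ (Real.exp_pos 3)
      _ = β * exp (3 - X) := by rw [mul_assoc, h2]
      _ ≤ β := mul_le_of_le_one_right hβ0.le h3
  have hucexp : uc < uc * exp 3 := by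
    calc uc = uc * 1 := (mul_one uc).symm
      _ < uc * exp 3 := mul_lt_mul_of_pos_left hexp3gt huc0
  -- frequency ω
  set m := 1 - ε/4 with hmdef
  have hmv : 0 < m - v^2/4 := by
    have hA : 0 < (2 - ε - v) * (2 - ε + v) := mul_pos (by linarith) (by linarith)
    have hB : 0 < ε * (3 - ε) := mul_pos hε (by linarith)
    rw [hmdef]
    nlinarith only [hA, hB]
  set ω := Real.sqrt (m - v^2/4) with hωdef
  have hω2 : ω^2 = m - v^2/4 := Real.sq_sqrt hmv.le
  have hωpos : 0 < ω := Real.sqrt_pos.2 hmv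
  have hωω₀ : ω₀ ≤ ω := by
    rw [hω₀def, hωdef]
    apply Real.sqrt_le_sqrt
    have hA : 0 < (2 - ε - v) * (2 - ε + v) := mul_pos (by linarith) (by linarith)
    have hC : 0 ≤ ε * (1 - ε) := mul_nonneg hε.le (by linarith)
    rw [hmdef]
    nlinarith only [hA, hC]
  -- find Y with U Y > β
  obtain ⟨Y, hYβ, hY0⟩ := ((hU.2.2.2.2.2.2.1.eventually
    (eventually_gt_nhds hβ1)).and (eventually_lt_atBot (0:ℝ))).exists
  have hIVT1 := intermediate_value_Icc' hY0.le hcont.continuousOn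
  have hucβ' : uc < β := lt_trans hucexp hucβ
  have hβmem : β ∈ Icc (U 0) (U Y) := by
    constructor
    · rw [hU.2.2.2.1]; linarith
    · exact hYβ.le
  obtain ⟨y₁, hy₁mem, hy₁⟩ := hIVT1 hβmem
  set c₂ := uc * exp 3 with hc₂def
  have hc₂uc : uc < c₂ := hucexp
  have hc₂0 : 0 < c₂ := by linarith only [hucexp, huc0]
  have hc₂mem : c₂ ∈ Icc (U 0) (U Y) := by
    constructor
    · rw [hU.2.2.2.1]; linarith
    · linarith [hYβ]
  obtain ⟨y₂, hy₂mem, hy₂⟩ := hIVT1 hc₂mem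
  have hy₁le : y₁ ≤ 0 := hy₁mem.2
  have hy₂le : y₂ ≤ 0 := hy₂mem.2
  have hy₂0 : y₂ < 0 := by
    rcases lt_or_eq_of_le hy₂le with h | h
    · exact h
    · exfalso; rw [h] at hy₂; rw [hU.2.2.2.1] at hy₂; linarith
  have hy₁0 : y₁ < 0 := by
    rcases lt_or_eq_of_le hy₁le with h | h
    · exact h
    · exfalso; rw [h] at hy₁; rw [hU.2.2.2.1] at hy₁; linarith
  have hanti := U_anti hf hucI hv hU
  have hy₁lt : y₁ < y₂ := by
    by_contra hcc
    push_neg at hcc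
    have := hanti (mem_Iic.2 hy₂le) (mem_Iic.2 hy₁le) hcc
    rw [hy₁, hy₂] at this
    linarith
  -- v * y₂ ≤ -3
  have hψ : MonotoneOn (fun y => U y - uc * exp (-(v*y))) (Iic 0) := by
    apply monotoneOn_of_deriv_nonneg (convex_Iic 0)
    · exact (hcont.sub (continuous_const.mul
        (Real.continuous_exp.comp (continuous_const.mul continuous_id).neg))).continuousOn
    · intro x _
      have hexp2 : HasDerivAt (fun y : ℝ => exp (-(v*y))) (exp (-(v*x)) * (-v)) x := by
        simpa using (((hasDerivAt_id x).const_mul v).neg.exp)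
      exact (((hD x).hasDerivAt).sub
        (hexp2.const_mul uc)).differentiableAt.differentiableWithinAt
    · intro x hx
      rw [interior_Iic] at hx
      have hexp2 : HasDerivAt (fun y : ℝ => exp (-(v*y))) (exp (-(v*x)) * (-v)) x := by
        simpa using (((hasDerivAt_id x).const_mul v).neg.exp)
      have hd1 : HasDerivAt (fun y => U y - uc * exp (-(v*y))) _ x :=
        ((hD x).hasDerivAt).sub (hexp2.const_mul uc)
      rw [hd1.deriv]
      have hlow := dU_lower hf hucI hv hU x hx.le
      linarith only [hlow]
  have h5 := hψ (mem_Iic.2 hy₂le) (mem_Iic.2 le_rfl) hy₂le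
  simp only [mul_zero, neg_zero, Real.exp_zero, mul_one] at h5
  rw [hU.2.2.2.1, hy₂] at h5
  -- c₂ ≤ uc * exp (-(v*y₂))
  have hexpy₂ : exp 3 ≤ exp (-(v*y₂)) := by
    have h6 : uc * exp 3 ≤ uc * exp (-(v*y₂)) := by linarith [h5]
    exact le_of_mul_le_mul_left h6 huc0
  have hvy₂ : v * y₂ ≤ -3 := by
    have := Real.exp_le_exp.1 hexpy₂
    linarith
  -- bounds for U on [y₁, y₂]
  have hUbound : ∀ x ∈ Icc y₁ y₂, c₂ ≤ U x ∧ U x ≤ β := by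
    intro x hx
    have hx0 : x ≤ 0 := le_trans hx.2 hy₂le
    constructor
    · have := hanti (mem_Iic.2 hx0) (mem_Iic.2 hy₂le) hx.2
      rw [hy₂] at this
      linarith
    · have := hanti (mem_Iic.2 (le_trans hx.1 hx0 : y₁ ≤ 0)) (mem_Iic.2 hx0) hx.1
      rw [hy₁] at this
      linarith
  have hUpos : ∀ x ∈ Icc y₁ y₂, 0 < U x := fun x hx => lt_of_lt_of_le hc₂0 (hUbound x hx).1
  have hxneg : ∀ x ∈ Icc y₁ y₂, x < 0 := fun x hx => lt_of_le_of_lt hx.2 hy₂0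
  -- length bound
  have hlen : MonotoneOn (fun y => Real.log (U y) + 2*v*y) (Icc y₁ y₂) := by
    apply monotoneOn_of_deriv_nonneg (convex_Icc _ _)
    · apply ContinuousOn.add
      · exact ContinuousOn.log (hcont.continuousOn) (fun x hx => ne_of_gt (hUpos x hx))
      · exact (continuous_const.mul continuous_id).continuousOn
    · intro x hx
      rw [interior_Icc] at hx
      have hx' : x ∈ Icc y₁ y₂ := Ioo_subset_Icc_self hx
      have h1 : HasDerivAt (fun y => Real.log (U y)) (deriv U x / U x) x :=
        ((hD x).hasDerivAt).log (ne_of_gt (hUpos x hx'))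
      exact (h1.add ((hasDerivAt_id x).const_mul (2*v))).differentiableAt.differentiableWithinAt
    · intro x hx
      rw [interior_Icc] at hx
      have hx' : x ∈ Icc y₁ y₂ := Ioo_subset_Icc_self hx
      have h1 : HasDerivAt (fun y => Real.log (U y) + 2*v*y) (deriv U x / U x + 2*v*1) x :=
        (((hD x).hasDerivAt).log (ne_of_gt (hUpos x hx'))).add
          ((hasDerivAt_id x).const_mul (2*v))
      rw [h1.deriv]
      have hxneg' := hxneg x hx'
      have hvx : v * x ≤ -1 := by
        have h3 := mul_lt_mul_of_pos_left hx.2 hv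
        linarith only [h3, hvy₂]
      have hsd := slow_decay hf hucI hv hU x hxneg' hvx
      have hUx := hUpos x hx'
      have h2 : -(2*v) ≤ deriv U x / U x := by
        rw [le_div_iff₀ hUx]
        exact hsd
      linarith
  have hlen2 := hlen (left_mem_Icc.2 hy₁lt.le) (right_mem_Icc.2 hy₁lt.le) hy₁lt.le
  simp only at hlen2
  rw [hy₁, hy₂] at hlen2
  have hlogc₂ : Real.log c₂ = Real.log uc + 3 := by
    rw [hc₂def, Real.log_mul (ne_of_gt huc0) (Real.exp_ne_zero _), Real.log_exp]
  rw [hlogc₂] at hlen2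
  have hLlen : Real.log β - Real.log uc - 3 ≤ 2*v*(y₂ - y₁) := by linarith only [hlen2]
  -- the angle argument
  set r := fun y => -deriv U y / U y with hrdef
  have hΘ : MonotoneOn (fun y => Real.arctan ((r y - v/2)/ω) - ω*y) (Icc y₁ y₂) := by
    have hrd : ∀ x ∈ Ioo y₁ y₂, HasDerivAt (fun y => Real.arctan ((r y - v/2)/ω) - ω*y)
        (1/(1 + ((r x - v/2)/ω)^2) *
          ((((v * deriv U x + cutoff f uc (U x)) * U x - (-deriv U x) * deriv U x)/(U x)^2)/ω)
          - ω*1) x := by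
      intro x hx
      have hx' : x ∈ Icc y₁ y₂ := Ioo_subset_Icc_self hx
      have hUx := hUpos x hx'
      have hUxne : U x ≠ 0 := ne_of_gt hUx
      have hxne : x ≠ 0 := ne_of_lt (hxneg x hx')
      have hnum : HasDerivAt (fun y => -deriv U y) (v * deriv U x + cutoff f uc (U x)) x := by
        have := (hdd hU hxne).neg
        rwa [neg_neg] at this
      have hr : HasDerivAt r
          (((v * deriv U x + cutoff f uc (U x)) * U x - (-deriv U x) * deriv U x)/(U x)^2) x :=
        hnum.div ((hD x).hasDerivAt) hUxne
      exact (((hr.sub_const (v/2)).div_const ω).arctan).sub ((hasDerivAt_id x).const_mul ω)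
    apply monotoneOn_of_deriv_nonneg (convex_Icc _ _)
    · apply ContinuousOn.sub
      · apply Real.continuous_arctan.comp_continuousOn
        apply ContinuousOn.div_const
        apply ContinuousOn.sub
        · exact (hdC.neg.continuousOn).div (hcont.continuousOn)
            (fun x hx => ne_of_gt (hUpos x hx))
        · exact continuousOn_const
      · exact (continuous_const.mul continuous_id).continuousOn
    · intro x hx
      rw [interior_Icc] at hx
      exact (hrd x hx).differentiableAt.differentiableWithinAt
    · intro x hx
      rw [interior_Icc] at hx
      rw [(hrd x hx).deriv]
      have hx' : x ∈ Icc y₁ y₂ := Ioo_subset_Icc_self hx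
      have hUx := hUpos x hx'
      have hUxne : U x ≠ 0 := ne_of_gt hUx
      set R := ((v * deriv U x + cutoff f uc (U x)) * U x - (-deriv U x) * deriv U x)/(U x)^2
        with hRdef
      have hcut : cutoff f uc (U x) = f (U x) := by
        unfold cutoff
        rw [if_pos (lt_of_lt_of_le hc₂uc (hUbound x hx').1)]
      have hq : m * U x ≤ cutoff f uc (U x) := by
        rw [hcut, hmdef]
        exact hβf (U x) hUx (hUbound x hx').2
      have hqdiv : m ≤ cutoff f uc (U x) / U x := by
        rw [le_div_iff₀ hUx]
        linarith [hq]
      have hRval : R = (r x)^2 - v * (r x) + cutoff f uc (U x) / U x := by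
        rw [hRdef, hrdef]
        field_simp
        ring
      have hkey : ω^2 + (r x - v/2)^2 ≤ R := by
        rw [hRval, hω2]
        nlinarith only [hqdiv]
      have hωne : ω ≠ 0 := ne_of_gt hωpos
      have hsω : ((r x - v/2)/ω)^2 * ω^2 = (r x - v/2)^2 := by
        field_simp
      have h1s : (0:ℝ) < 1 + ((r x - v/2)/ω)^2 := by positivity
      rw [sub_nonneg, mul_one]
      have heq : 1/(1 + ((r x - v/2)/ω)^2) * (R/ω) = R/(ω*(1 + ((r x - v/2)/ω)^2)) := by
        field_simp
      rw [heq, le_div_iff₀ (by positivity)]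
      nlinarith only [hkey, hsω]
  have hΘ2 := hΘ (left_mem_Icc.2 hy₁lt.le) (right_mem_Icc.2 hy₁lt.le) hy₁lt.le
  simp only at hΘ2
  have harc1 : -(π/2) < Real.arctan ((r y₁ - v/2)/ω) := Real.neg_pi_div_two_lt_arctan _
  have harc2 : Real.arctan ((r y₂ - v/2)/ω) < π/2 := Real.arctan_lt_pi_div_two _
  have hωlen : ω * (y₂ - y₁) < π := by linarith only [hΘ2, harc1, harc2]
  -- final contradiction
  have hL : 0 < y₂ - y₁ := by linarith
  have hω₀4π : ω₀ * (4*π/ω₀) = 4*π := by field_simp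
  have hgap2 : 4*π/ω₀ + 1 < Real.log β - Real.log uc - 3 := by
    rw [hXdef] at hloguc
    linarith
  have s1 : ω₀ * (y₂ - y₁) < π := by
    have h7 := mul_nonneg (sub_nonneg.2 hωω₀) hL.le
    nlinarith only [h7, hωlen]
  have s2 : ω₀ * (Real.log β - Real.log uc - 3) ≤ ω₀ * (2*v*(y₂-y₁)) :=
    mul_le_mul_of_nonneg_left hLlen hω₀.le
  have s3 : ω₀ * (2*v*(y₂-y₁)) ≤ 4 * (ω₀ * (y₂ - y₁)) := by
    have h7 : (0:ℝ) ≤ (4 - 2*v) * (ω₀ * (y₂ - y₁)) :=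
      mul_nonneg (by linarith) (mul_nonneg hω₀.le hL.le)
    nlinarith only [h7]
  have s4 : ω₀*(4*π/ω₀ + 1) < ω₀ * (Real.log β - Real.log uc - 3) :=
    mul_lt_mul_of_pos_left hgap2 hω₀
  have s5 : ω₀*(4*π/ω₀ + 1) = 4*π + ω₀ := by
    rw [mul_add, hω₀4π, mul_one]
  linarith only [s1, s2, s3, s4, s5, hω₀]

/-- The propagation speed tends to `2` as the cut-off tends to `0⁺`. -/
theorem vstar_tendsto_two (f : ℝ → ℝ) (hf : IsKPP f) (vstar : ℝ → ℝ)
    (hvstar : ∀ uc ∈ Set.Ioo (0:ℝ) 1, 0 ≤ vstar uc ∧ ∃ U : ℝ → ℝ, IsPTW f uc (vstar uc) U) :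
    Tendsto vstar (𝓝[>] (0:ℝ)) (𝓝 2) := by
  rw [Metric.tendsto_nhdsWithin_nhds]
  intro ε hε
  have hε₁0 : 0 < min (ε/2) 1 := lt_min (by linarith) one_pos
  have hε₁1 : min (ε/2) 1 ≤ 1 := min_le_right _ _
  obtain ⟨δ₁, hδ₁0, hδ₁⟩ := lower_bound hf hε₁0 hε₁1
  refine ⟨min δ₁ (1/2), by positivity, ?_⟩
  intro x hx hxd
  rw [Real.dist_eq, sub_zero] at hxd
  have hx0 : 0 < x := hx
  rw [abs_of_pos hx0] at hxd
  have hx1 : x < 1 := by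
    have := min_le_right δ₁ (1/2)
    linarith [hxd]
  have hxI : x ∈ Set.Ioo (0:ℝ) 1 := ⟨hx0, hx1⟩
  obtain ⟨hv0, U, hU⟩ := hvstar x hxI
  have hupper : vstar x < 2 := v_lt_two hf hxI hv0 hU
  have hlower : 2 - min (ε/2) 1 ≤ vstar x :=
    hδ₁ x hxI (lt_of_lt_of_le hxd (min_le_left _ _)) (vstar x) U hv0 hU
  rw [Real.dist_eq, abs_lt]
  constructor
  · have : min (ε/2) 1 ≤ ε/2 := min_le_left _ _
    linarith
  · linarith
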